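/- The generalized hypergeometric series ₃F₂(3/2, 2, 2; 5/3, 13/6; 1/4) equals (14/2187)·( 216 + √3·(18 + 5·3^{1/3})·π − 30·3^{5/6}·arctan((2 + 3^{1/3})/3^{5/6}) + 54·ln 2 + 30·3^{1/3}·ln(3 − 3^{2/3}) − 15·3^{1/3}·ln(3·(3 + 3^{1/3} + 3^{2/3})) ). -/

import Mathlib

open Real intervalIntegral MeasureTheory

noncomputable def poch (a : ℝ) (n : ℕ) : ℝ := Polynomial.eval a (ascPochhammer ℝ n)

lemma poch_zero (a : ℝ) : poch a 0 = 1 := by simp [poch]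

lemma poch_succ (a : ℝ) (n : ℕ) : poch a (n+1) = poch a n * (a + n) := by
  simp [poch, ascPochhammer_succ_right]

lemma poch_pos {a : ℝ} (ha : 0 < a) (n : ℕ) : 0 < poch a n := by
  induction n with
  | zero => simp [poch_zero]
  | succ n ih => rw [poch_succ]; positivity

noncomputable def Iq (k : ℕ) : ℝ := ∫ u in (0:ℝ)..1, (1 - u^3)^k

lemma Iq_rec (k : ℕ) : (3*(k:ℝ)+4) * Iq (k+1) = (3*k+3) * Iq k := by
  have key : ∀ u : ℝ, HasDerivAt (fun u : ℝ => u * (1-u^3)^(k+1))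
      ((3*(k:ℝ)+4) * (1-u^3)^(k+1) - (3*k+3) * (1-u^3)^k) u := by
    intro u
    have h1 : HasDerivAt (fun u : ℝ => u * (1-u^3)^(k+1))
        (1 * (1-u^3)^(k+1) + u * ((k+1 : ℕ) * (1-u^3)^k * (-(3*u^2)))) u := by
      exact (hasDerivAt_id u).mul (((hasDerivAt_pow 3 u).const_sub 1).pow (k+1))
    convert h1 using 1
    push_cast
    ring_nf
  have h2 : (∫ u in (0:ℝ)..1, ((3*(k:ℝ)+4) * (1-u^3)^(k+1) - (3*k+3) * (1-u^3)^k))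
      = (1 : ℝ) * (1-1^3)^(k+1) - 0 * (1-0^3)^(k+1) := by
    apply integral_eq_sub_of_hasDerivAt (fun u _ => key u)
    apply Continuous.intervalIntegrable
    continuity
  norm_num at h2
  rw [intervalIntegral.integral_sub, intervalIntegral.integral_const_mul, intervalIntegral.integral_const_mul] at h2
  · rw [Iq, Iq]; linarith [h2]
  · apply Continuous.intervalIntegrable; continuity
  · apply Continuous.intervalIntegrable; continuity

lemma Iq_two : Iq 2 = 9/14 := by
  have key : ∀ u : ℝ, HasDerivAt (fun u : ℝ => u - u^4/2 + u^7/7) ((1-u^3)^2) u := by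
    intro u
    have h1 : HasDerivAt (fun u : ℝ => u - u^4/2 + u^7/7)
        (1 - (4:ℕ)*u^3/2 + (7:ℕ)*u^6/7) u := by
      exact ((hasDerivAt_id u).sub ((hasDerivAt_pow 4 u).div_const 2)).add
        ((hasDerivAt_pow 7 u).div_const 7)
    convert h1 using 1; push_cast; ring
  have h2 : Iq 2 = ((1:ℝ) - 1^4/2 + 1^7/7) - (0 - 0^4/2 + 0^7/7) := by
    apply integral_eq_sub_of_hasDerivAt (fun u _ => key u)
    apply Continuous.intervalIntegrable; continuity
  rw [h2]; norm_num

lemma term_eq (n : ℕ) :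
    9 * (poch (3/2) n * poch 2 n * poch 2 n)
      = 14 * ((n:ℝ)+1) * (poch (5/3) n * poch (13/6) n * (n.factorial : ℝ)) * Iq (2*n+2) := by
  induction n with
  | zero => simp [poch_zero, Iq_two]; norm_num [Iq_two]
  | succ n ih =>
    have hA := Iq_rec (2*n+2)
    have hB := Iq_rec (2*n+3)
    push_cast at hA hB ⊢
    rw [poch_succ, poch_succ, poch_succ, poch_succ, Nat.factorial_succ]
    have h1 : 2*(n+1)+2 = 2*n+3+1 := by ring
    have h2 : 2*n+2+1 = 2*n+3 := by ring
    rw [h1]; rw [h2] at hA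
    push_cast
    set D : ℝ := poch (5/3) n * poch (13/6) n * (n.factorial : ℝ) with hD
    apply mul_left_cancel₀ (show ((6*(n:ℝ)+10)*(6*(n:ℝ)+13)) ≠ 0 by positivity)
    linear_combination ((6*(n:ℝ)+10)*(6*(n:ℝ)+13)*(3/2+(n:ℝ))*(2+(n:ℝ))^2) * ih
      - (14*((n:ℝ)+2)*(5/3+(n:ℝ))*(13/6+(n:ℝ))*((n:ℝ)+1)*(6*(n:ℝ)+12)*D) * hA
      - (14*((n:ℝ)+2)*(5/3+(n:ℝ))*(13/6+(n:ℝ))*((n:ℝ)+1)*(6*(n:ℝ)+10)*D) * hB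

lemma arctan_sqrt3_inv : Real.arctan (1 / Real.sqrt 3) = π / 6 := by
  have hp1 : -(π/2) < π/6 := by nlinarith [Real.pi_pos]
  have hp2 : π/6 < π/2 := by nlinarith [Real.pi_pos]
  rw [← Real.tan_pi_div_six, Real.arctan_tan hp1 hp2]

lemma hasSum_pt {u : ℝ} (h0 : 0 < u) (h1 : u ≤ 1) :
    HasSum (fun n : ℕ => 14*((n:ℝ)+1)/(9*4^n) * (1-u^3)^(2*n+2))
      (224/9 * ((1-u^3)^2/((1+u^3)^2*(3-u^3)^2))) := by
  have hu3 : 0 < u^3 := by positivity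
  have hu1 : u^3 ≤ 1 := by
    nlinarith [sq_nonneg u, sq_nonneg (1-u)]
  have hrn : ‖(1-u^3)^2/4‖ < 1 := by
    rw [Real.norm_eq_abs, abs_of_nonneg (by positivity)]
    nlinarith
  have hs1 := hasSum_coe_mul_geometric_of_norm_lt_one hrn
  have hs2 := hasSum_geometric_of_norm_lt_one hrn
  have hs3 : HasSum (fun n : ℕ => ((n:ℝ)+1) * ((1-u^3)^2/4)^n)
      ((1-u^3)^2/4 / (1-(1-u^3)^2/4)^2 + (1-(1-u^3)^2/4)⁻¹) := by
    have := hs1.add hs2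
    convert this using 2 with n
    · rfl
    ring
  have hs4 := hs3.mul_left (14/9 * (1-u^3)^2)
  have hne : (1:ℝ) - (1-u^3)^2/4 ≠ 0 := by nlinarith
  have hA : (1:ℝ) + u^3 ≠ 0 := by positivity
  have hB : (3:ℝ) - u^3 ≠ 0 := by nlinarith
  have hfun : (fun n : ℕ => 14*((n:ℝ)+1)/(9*4^n) * (1-u^3)^(2*n+2))
      = fun n : ℕ => 14/9 * (1-u^3)^2 * (((n:ℝ)+1) * ((1-u^3)^2/4)^n) := by
    funext n
    have h4 : (4:ℝ)^n ≠ 0 := by positivity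
    rw [div_pow, show 2*n+2 = 2*n+2 from rfl]
    rw [show ((1-u^3)^2)^n = (1-u^3)^(2*n) by rw [← pow_mul]]
    rw [show (1-u^3)^(2*n+2) = (1-u^3)^(2*n) * (1-u^3)^2 by rw [← pow_add]]
    field_simp
  have hval : 14/9 * (1-u^3)^2 * ((1-u^3)^2/4 / (1-(1-u^3)^2/4)^2 + (1-(1-u^3)^2/4)⁻¹)
      = 224/9 * ((1-u^3)^2/((1+u^3)^2*(3-u^3)^2)) := by
    rw [show (1:ℝ)-(1-u^3)^2/4 = (1+u^3)*(3-u^3)/4 by ring]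
    field_simp
    ring
  rw [hfun, ← hval]
  exact hs4

set_option maxHeartbeats 1000000 in
lemma swap_lemma :
    HasSum (fun n : ℕ => 14*((n:ℝ)+1)/(9*4^n) * Iq (2*n+2))
      (∫ u in (0:ℝ)..1, 224/9 * ((1-u^3)^2/((1+u^3)^2*(3-u^3)^2))) := by
  have key := intervalIntegral.hasSum_integral_of_dominated_convergence
    (μ := volume) (a := 0) (b := 1)
    (F := fun (n : ℕ) (u : ℝ) => 14*((n:ℝ)+1)/(9*4^n) * (1-u^3)^(2*n+2))
    (f := fun u => 224/9 * ((1-u^3)^2/((1+u^3)^2*(3-u^3)^2)))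
    (bound := fun n _ => 14*((n:ℝ)+1)/(9*4^n))
    (fun n => (Continuous.aestronglyMeasurable (by continuity)))
    (fun n => by
      filter_upwards with u hu
      rw [Set.uIoc_of_le (by norm_num : (0:ℝ) ≤ 1)] at hu
      have h1 : |1 - u^3| ≤ 1 := by
        rw [abs_le]
        constructor <;> nlinarith [hu.1, hu.2, sq_nonneg u, sq_nonneg (1-u), sq_nonneg (1+u)]
      have h2 : |(1-u^3)^(2*n+2)| ≤ 1 := by
        rw [abs_pow]; exact pow_le_one₀ (abs_nonneg _) h1
      rw [norm_mul, norm_pow]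
      calc ‖14*((n:ℝ)+1)/(9*4^n)‖ * ‖1-u^3‖^(2*n+2)
          ≤ ‖14*((n:ℝ)+1)/(9*4^n)‖ * 1 := by
            apply mul_le_mul_of_nonneg_left _ (norm_nonneg _)
            rw [Real.norm_eq_abs, ← abs_pow]; exact h2
        _ = 14*((n:ℝ)+1)/(9*4^n) := by
            rw [mul_one, Real.norm_eq_abs, abs_of_nonneg (by positivity)]
    )
    (by
      filter_upwards with u _
      have hs : Summable (fun n : ℕ => ((n:ℝ)+1) * (1/4)^n) := by
        have h := (hasSum_coe_mul_geometric_of_norm_lt_one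
          (r := (1/4 : ℝ)) (by norm_num)).summable.add
          (hasSum_geometric_of_norm_lt_one (ξ := (1/4:ℝ)) (by norm_num)).summable
        apply h.congr
        intro n; ring
      apply Summable.congr (hs.mul_left (14/9))
      intro n
      rw [div_pow]
      field_simp
      simp)
    (_root_.intervalIntegrable_const (c := ∑' n : ℕ, 14*((n:ℝ)+1)/(9*4^n)))
    (by
      filter_upwards with u hu
      rw [Set.uIoc_of_le (by norm_num : (0:ℝ) ≤ 1)] at hu
      exact hasSum_pt hu.1 hu.2)
  convert key using 2 with n
  · rfl
  rw [Iq, ← intervalIntegral.integral_const_mul]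

-- the "generic" antiderivative of 1/(1-v^3) type integrands
lemma hasDerivAt_FA (u : ℝ) (h0 : 0 ≤ u) (h1 : u ≤ 1) :
    HasDerivAt (fun u : ℝ => (1/3)*Real.log (1+u) - (1/6)*Real.log (u^2-u+1)
        + (Real.sqrt 3/3)*Real.arctan ((2*u-1)/Real.sqrt 3))
      (1/(1+u^3)) u := by
  have hA : (0:ℝ) < 1 + u := by linarith
  have hq : u^2 - u + 1 ≠ 0 := by nlinarith [sq_nonneg (2*u-1)]
  have hs0 : (0:ℝ) < Real.sqrt 3 := by positivity
  have hs : Real.sqrt 3 ≠ 0 := ne_of_gt hs0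
  have hs2 : Real.sqrt 3 ^ 2 = 3 := Real.sq_sqrt (by norm_num)
  have d1 : HasDerivAt (fun u : ℝ => Real.log (1+u)) (1/(1+u)) u := by
    have := (((hasDerivAt_id u).const_add 1)).log (show (1:ℝ) + id u ≠ 0 by simp only [id_eq]; linarith)
    simpa using this
  have hp2 : HasDerivAt (fun u : ℝ => u^2-u+1) (2*u-1) u := by
    have := ((hasDerivAt_pow 2 u).sub (hasDerivAt_id u)).add_const 1
    simpa using this
  have d2 : HasDerivAt (fun u : ℝ => Real.log (u^2-u+1)) ((2*u-1)/(u^2-u+1)) u :=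
    hp2.log hq
  have hp3 : HasDerivAt (fun u : ℝ => (2*u-1)/Real.sqrt 3) (2/Real.sqrt 3) u := by
    have := (((hasDerivAt_id u).const_mul 2).sub_const 1).div_const (Real.sqrt 3)
    simpa using this
  have d3 : HasDerivAt (fun u : ℝ => Real.arctan ((2*u-1)/Real.sqrt 3))
      ((1/(1+((2*u-1)/Real.sqrt 3)^2)) * (2/Real.sqrt 3)) u := hp3.arctan
  have dd := ((d1.const_mul (1/3:ℝ)).sub (d2.const_mul (1/6:ℝ))).add
    (d3.const_mul (Real.sqrt 3/3))
  refine dd.congr_deriv (Eq.symm ?_)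
  have hden : 1 + ((2*u-1)/Real.sqrt 3)^2 ≠ 0 := by positivity
  have h3 : (1:ℝ) + u^3 ≠ 0 := by positivity
  have hq' : u*(u-1)+1 ≠ 0 := by nlinarith [sq_nonneg (2*u-1)]
  field_simp
  rw [hs2]
  ring

noncomputable def cc : ℝ := (3:ℝ) ^ ((1:ℝ)/3)

lemma cc_pos : 0 < cc := Real.rpow_pos_of_pos (by norm_num) _
lemma cc_cube : cc^3 = 3 := by
  rw [cc, ← Real.rpow_natCast ((3:ℝ)^((1:ℝ)/3)) 3, ← Real.rpow_mul (by norm_num)]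
  norm_num
lemma cc_gt_one : 1 < cc := Real.one_lt_rpow_iff_of_pos (by norm_num) |>.mpr (by norm_num)

lemma hasDerivAt_H (v : ℝ) (h1 : v < 1) :
    HasDerivAt (fun v : ℝ => -(1/3)*Real.log (1-v) + (1/6)*Real.log (v^2+v+1)
        + (Real.sqrt 3/3)*Real.arctan ((2*v+1)/Real.sqrt 3))
      (1/(1-v^3)) v := by
  have hA : (0:ℝ) < 1 - v := by linarith
  have hq : v^2 + v + 1 ≠ 0 := by nlinarith [sq_nonneg (2*v+1)]
  have hs0 : (0:ℝ) < Real.sqrt 3 := by positivity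
  have hs : Real.sqrt 3 ≠ 0 := ne_of_gt hs0
  have hs2 : Real.sqrt 3 ^ 2 = 3 := Real.sq_sqrt (by norm_num)
  have d1 : HasDerivAt (fun v : ℝ => Real.log (1-v)) (-1/(1-v)) v := by
    have := (((hasDerivAt_id v).const_sub 1)).log (show (1:ℝ) - id v ≠ 0 by simp only [id_eq]; linarith)
    simpa using this
  have hp2 : HasDerivAt (fun v : ℝ => v^2+v+1) (2*v+1) v := by
    have := ((hasDerivAt_pow 2 v).add (hasDerivAt_id v)).add_const 1
    simpa using this
  have d2 : HasDerivAt (fun v : ℝ => Real.log (v^2+v+1)) ((2*v+1)/(v^2+v+1)) v :=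
    hp2.log hq
  have hp3 : HasDerivAt (fun v : ℝ => (2*v+1)/Real.sqrt 3) (2/Real.sqrt 3) v := by
    have := (((hasDerivAt_id v).const_mul 2).add_const 1).div_const (Real.sqrt 3)
    simpa using this
  have d3 : HasDerivAt (fun v : ℝ => Real.arctan ((2*v+1)/Real.sqrt 3))
      ((1/(1+((2*v+1)/Real.sqrt 3)^2)) * (2/Real.sqrt 3)) v := hp3.arctan
  have dd := ((d1.const_mul (-(1/3):ℝ)).add (d2.const_mul (1/6:ℝ))).add
    (d3.const_mul (Real.sqrt 3/3))
  refine dd.congr_deriv (Eq.symm ?_)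
  have hden : 1 + ((2*v+1)/Real.sqrt 3)^2 ≠ 0 := by positivity
  have h3 : (1:ℝ) - v^3 ≠ 0 := by nlinarith [sq_nonneg v, sq_nonneg (1+v)]
  have hq' : v*(v+1)+1 ≠ 0 := by nlinarith [sq_nonneg (2*v+1)]
  field_simp
  rw [hs2]
  ring

lemma contA : ∀ u ∈ Set.uIcc (0:ℝ) 1, (1:ℝ) + u^3 ≠ 0 := by
  intro u hu
  rw [Set.uIcc_of_le (by norm_num : (0:ℝ) ≤ 1)] at hu
  have h3 := pow_nonneg hu.1 3
  intro hzero; nlinarith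

lemma contB : ∀ u ∈ Set.uIcc (0:ℝ) 1, (3:ℝ) - u^3 ≠ 0 := by
  intro u hu
  rw [Set.uIcc_of_le (by norm_num : (0:ℝ) ≤ 1)] at hu
  have h1 : u^3 ≤ 1 := by nlinarith [hu.1, hu.2, sq_nonneg u]
  nlinarith

lemma intA : IntervalIntegrable (fun u : ℝ => 1/(1+u^3)) volume 0 1 :=
  (ContinuousOn.div continuousOn_const (by fun_prop) contA).intervalIntegrable

lemma intA2 : IntervalIntegrable (fun u : ℝ => 1/(1+u^3)^2) volume 0 1 :=
  (ContinuousOn.div continuousOn_const (by fun_prop)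
    (fun u hu => pow_ne_zero 2 (contA u hu))).intervalIntegrable

lemma intB : IntervalIntegrable (fun u : ℝ => 1/(3-u^3)) volume 0 1 :=
  (ContinuousOn.div continuousOn_const (by fun_prop) contB).intervalIntegrable

lemma intB2 : IntervalIntegrable (fun u : ℝ => 1/(3-u^3)^2) volume 0 1 :=
  (ContinuousOn.div continuousOn_const (by fun_prop)
    (fun u hu => pow_ne_zero 2 (contB u hu))).intervalIntegrable

lemma K1 : ∫ u in (0:ℝ)..1, 1/(1+u^3) = 1/3*Real.log 2 + Real.sqrt 3 * π / 9 := by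
  have h := integral_eq_sub_of_hasDerivAt (a := 0) (b := 1)
    (f := fun u : ℝ => (1/3)*Real.log (1+u) - (1/6)*Real.log (u^2-u+1)
        + (Real.sqrt 3/3)*Real.arctan ((2*u-1)/Real.sqrt 3))
    (f' := fun u : ℝ => 1/(1+u^3))
    (fun u hu => by
      rw [Set.uIcc_of_le (by norm_num : (0:ℝ) ≤ 1)] at hu
      exact hasDerivAt_FA u hu.1 hu.2) intA
  rw [h]
  norm_num
  rw [show Real.arctan (-1/Real.sqrt 3) = -(π/6) by
      rw [show (-1:ℝ)/Real.sqrt 3 = -(1/Real.sqrt 3) by ring, Real.arctan_neg, arctan_sqrt3_inv]]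
  ring

lemma L1 : ∫ u in (0:ℝ)..1, 1/(3-u^3)
    = cc/3 * (-(1/3)*Real.log (1-1/cc) + (1/6)*Real.log ((1/cc)^2+1/cc+1)
        + (Real.sqrt 3/3)*Real.arctan ((2*(1/cc)+1)/Real.sqrt 3))
      - cc/3 * (Real.sqrt 3/3) * (π/6) := by
  have hc0 : cc ≠ 0 := ne_of_gt cc_pos
  have h := integral_eq_sub_of_hasDerivAt (a := 0) (b := 1)
    (f := fun u : ℝ => cc/3 * (-(1/3)*Real.log (1-u/cc) + (1/6)*Real.log ((u/cc)^2+u/cc+1)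
        + (Real.sqrt 3/3)*Real.arctan ((2*(u/cc)+1)/Real.sqrt 3)))
    (f' := fun u : ℝ => 1/(3-u^3))
    (fun u hu => by
      rw [Set.uIcc_of_le (by norm_num : (0:ℝ) ≤ 1)] at hu
      have hv : u/cc < 1 := by
        rw [div_lt_one cc_pos]; linarith [hu.2, cc_gt_one]
      have hB : (3:ℝ) - u^3 ≠ 0 := by
        have h1 : u^3 ≤ 1 := by nlinarith [hu.1, hu.2, sq_nonneg u]
        nlinarith
      have inner : HasDerivAt (fun u : ℝ => u/cc) (1/cc) u := by
        have := (hasDerivAt_id u).div_const cc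
        simpa using this
      have comp := (hasDerivAt_H (u/cc) hv).comp u inner
      have dd := comp.const_mul (cc/3)
      refine dd.congr_deriv (Eq.symm ?_)
      show 1/(3-u^3) = cc/3 * (1/(1-(u/cc)^3) * (1/cc))
      rw [div_pow, cc_cube]
      field_simp) intB
  rw [h]
  norm_num
  ring

lemma K2 : ∫ u in (0:ℝ)..1, 1/(1+u^3)^2
    = 1/6 + 2/3 * ∫ u in (0:ℝ)..1, 1/(1+u^3) := by
  have h := integral_eq_sub_of_hasDerivAt (a := 0) (b := 1)
    (f := fun u : ℝ => u/(3*(1+u^3)))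
    (f' := fun u : ℝ => 1/(1+u^3)^2 - (2/3)*(1/(1+u^3)))
    (fun u hu => by
      have hA : (1:ℝ) + u^3 ≠ 0 := contA u hu
      have dd := (hasDerivAt_id u).div
        (((hasDerivAt_pow 3 u).const_add 1).const_mul 3) (by
          intro hz; exact hA (by simpa using mul_eq_zero.mp hz |>.resolve_left (by norm_num)))
      refine dd.congr_deriv (Eq.symm ?_)
      simp only [id_eq]
      field_simp
      ring)
    (intA2.sub (intA.const_mul (2/3)))
  rw [intervalIntegral.integral_sub intA2 (intA.const_mul (2/3)),
    intervalIntegral.integral_const_mul] at h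
  norm_num at h
  simp only [one_div] at h ⊢
  linarith

lemma L2 : ∫ u in (0:ℝ)..1, 1/(3-u^3)^2
    = 1/18 + 2/9 * ∫ u in (0:ℝ)..1, 1/(3-u^3) := by
  have h := integral_eq_sub_of_hasDerivAt (a := 0) (b := 1)
    (f := fun u : ℝ => u/(9*(3-u^3)))
    (f' := fun u : ℝ => 1/(3-u^3)^2 - (2/9)*(1/(3-u^3)))
    (fun u hu => by
      have hB : (3:ℝ) - u^3 ≠ 0 := contB u hu
      have dd := (hasDerivAt_id u).div
        (((hasDerivAt_pow 3 u).const_sub 3).const_mul 9) (by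
          intro hz; exact hB (by simpa using mul_eq_zero.mp hz |>.resolve_left (by norm_num)))
      refine dd.congr_deriv (Eq.symm ?_)
      simp only [id_eq]
      field_simp
      ring)
    (intB2.sub (intB.const_mul (2/9)))
  rw [intervalIntegral.integral_sub intB2 (intB.const_mul (2/9)),
    intervalIntegral.integral_const_mul] at h
  norm_num at h
  simp only [one_div] at h ⊢
  linarith

lemma split_lemma : (∫ u in (0:ℝ)..1, 224/9 * ((1-u^3)^2/((1+u^3)^2*(3-u^3)^2)))
    = 224/9 * (1/4 * (∫ u in (0:ℝ)..1, 1/(1+u^3)^2) + 1/4 * (∫ u in (0:ℝ)..1, 1/(3-u^3)^2)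
      - 1/8 * (∫ u in (0:ℝ)..1, 1/(1+u^3)) - 1/8 * (∫ u in (0:ℝ)..1, 1/(3-u^3))) := by
  have heq : Set.EqOn (fun u : ℝ => 224/9 * ((1-u^3)^2/((1+u^3)^2*(3-u^3)^2)))
      (fun u : ℝ => 224/9 * (1/4 * (1/(1+u^3)^2) + 1/4 * (1/(3-u^3)^2)
        - 1/8 * (1/(1+u^3)) - 1/8 * (1/(3-u^3)))) (Set.uIcc (0:ℝ) 1) := by
    intro u hu
    have hA := contA u hu
    have hB := contB u hu
    simp only
    field_simp
    ring
  rw [intervalIntegral.integral_congr heq, intervalIntegral.integral_const_mul]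
  congr 1
  rw [intervalIntegral.integral_sub (((intA2.const_mul (1/4)).add (intB2.const_mul (1/4))).sub
      (intA.const_mul (1/8))) (intB.const_mul (1/8)),
    intervalIntegral.integral_sub ((intA2.const_mul (1/4)).add (intB2.const_mul (1/4)))
      (intA.const_mul (1/8)),
    intervalIntegral.integral_add (intA2.const_mul (1/4)) (intB2.const_mul (1/4)),
    intervalIntegral.integral_const_mul, intervalIntegral.integral_const_mul,
    intervalIntegral.integral_const_mul, intervalIntegral.integral_const_mul]

theorem stmt_13 :
    ∑' n : ℕ, (poch (3/2) n * poch (2) n * poch (2) n) / (poch (5/3) n * poch (13/6) n * (Nat.factorial n : ℝ)) * (1/4 : ℝ) ^ n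
      = 14/2187 * (216 + Real.sqrt 3 * (18 + 5 * (3:ℝ) ^ ((1:ℝ)/3)) * Real.pi
          - 30 * (3:ℝ) ^ ((5:ℝ)/6)
              * Real.arctan ((2 + (3:ℝ) ^ ((1:ℝ)/3)) / (3:ℝ) ^ ((5:ℝ)/6))
          + 54 * Real.log 2
          + 30 * (3:ℝ) ^ ((1:ℝ)/3) * Real.log (3 - (3:ℝ) ^ ((2:ℝ)/3))
          - 15 * (3:ℝ) ^ ((1:ℝ)/3)
              * Real.log (3 * (3 + (3:ℝ) ^ ((1:ℝ)/3) + (3:ℝ) ^ ((2:ℝ)/3)))) := by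
  have hterm : ∀ n : ℕ, (poch (3/2) n * poch (2) n * poch (2) n) /
      (poch (5/3) n * poch (13/6) n * (Nat.factorial n : ℝ)) * (1/4 : ℝ) ^ n
      = 14*((n:ℝ)+1)/(9*4^n) * Iq (2*n+2) := by
    intro n
    have h1 : (0:ℝ) < poch (5/3) n := poch_pos (by norm_num) n
    have h2 : (0:ℝ) < poch (13/6) n := poch_pos (by norm_num) n
    have h3 : (0:ℝ) < (n.factorial : ℝ) := by exact_mod_cast n.factorial_pos
    have h4 : (4:ℝ)^n ≠ 0 := by positivity
    rw [div_pow, one_pow, div_mul_div_comm, mul_one,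
      show 14*((n:ℝ)+1)/(9*4^n) * Iq (2*n+2) = (14*((n:ℝ)+1) * Iq (2*n+2))/(9*4^n) from
        div_mul_eq_mul_div _ _ _,
      div_eq_div_iff (by positivity) (by positivity)]
    linear_combination (4:ℝ)^n * term_eq n
  have hs0 : (0:ℝ) < Real.sqrt 3 := by positivity
  have hc0 : cc ≠ 0 := ne_of_gt cc_pos
  have hc1 : cc - 1 ≠ 0 := by nlinarith [cc_gt_one]
  have hq0 : cc^2+cc+1 ≠ 0 := ne_of_gt (by nlinarith [cc_pos, sq_nonneg cc])
  have hcc : (3:ℝ)^((1:ℝ)/3) = cc := rfl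
  have hcsq : (3:ℝ)^((2:ℝ)/3) = cc^2 := by
    rw [cc, ← Real.rpow_natCast ((3:ℝ)^((1:ℝ)/3)) 2, ← Real.rpow_mul (by norm_num)]
    norm_num
  have h56 : (3:ℝ)^((5:ℝ)/6) = cc * Real.sqrt 3 := by
    rw [cc, Real.sqrt_eq_rpow, ← Real.rpow_add (by norm_num)]
    norm_num
  have harg : (2 + (3:ℝ)^((1:ℝ)/3)) / (3:ℝ)^((5:ℝ)/6) = (2*(1/cc)+1)/Real.sqrt 3 := by
    rw [h56, hcc]
    rw [div_eq_div_iff (by positivity) hs0.ne']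
    field_simp
  have hlog1 : Real.log (1-1/cc) = Real.log (cc-1) - Real.log cc := by
    rw [show 1-1/cc = (cc-1)/cc by field_simp, Real.log_div hc1 hc0]
  have hlog2 : Real.log ((1/cc)^2+1/cc+1) = Real.log (cc^2+cc+1) - 2*Real.log cc := by
    rw [show (1/cc)^2+1/cc+1 = (cc^2+cc+1)/cc^2 by field_simp; ring,
      Real.log_div hq0 (pow_ne_zero 2 hc0), Real.log_pow]
    push_cast; ring
  have hlog3 : Real.log (3 - (3:ℝ)^((2:ℝ)/3)) = 2*Real.log cc + Real.log (cc-1) := by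
    rw [hcsq, show (3:ℝ) - cc^2 = cc^2*(cc-1) by linear_combination -1*cc_cube,
      Real.log_mul (pow_ne_zero 2 hc0) hc1, Real.log_pow]
    push_cast; ring
  have hlog4 : Real.log (3*(3+(3:ℝ)^((1:ℝ)/3)+(3:ℝ)^((2:ℝ)/3)))
      = 3*Real.log cc + Real.log cc + Real.log (cc^2+cc+1) := by
    rw [hcc, hcsq, show (3:ℝ)*(3+cc+cc^2) = 3*(cc*(cc^2+cc+1)) by linear_combination -3*cc_cube,
      Real.log_mul (by norm_num) (mul_ne_zero hc0 hq0), Real.log_mul hc0 hq0,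
      show Real.log 3 = 3 * Real.log cc by rw [cc, Real.log_rpow (by norm_num)]; ring]
    ring
  calc ∑' n : ℕ, (poch (3/2) n * poch (2) n * poch (2) n) /
        (poch (5/3) n * poch (13/6) n * (Nat.factorial n : ℝ)) * (1/4 : ℝ) ^ n
      = ∑' n : ℕ, 14*((n:ℝ)+1)/(9*4^n) * Iq (2*n+2) := tsum_congr hterm
    _ = ∫ u in (0:ℝ)..1, 224/9 * ((1-u^3)^2/((1+u^3)^2*(3-u^3)^2)) := swap_lemma.tsum_eq
    _ = _ := by
        rw [split_lemma, K2, L2, K1, L1, harg, hlog3, hlog4, hlog1, hlog2, h56, hcc]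
        ring
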